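/- Let G be a simple graph, let x ∈ V(G), and let S ⊆ V(G) \ {x} be such that G has a k-fan between x and S. Then any (k−1)-fan between x and S can be extended to a k-fan between x and S in such a way that the end vertices of the (k−1)-fan are among the end vertices of the k-fan. -/

import Mathlib

open SimpleGraph

/-- A `k`-fan between `x` and `S` with end vertices `e 0, …, e (k-1)`: `k` paths joining
`x` to the `k` distinct vertices `e i` of `S`, pairwise disjoint except at `x`, each
meeting `S` in exactly one vertex (its end). -/
def HasFanOn {V : Type*} (G : SimpleGraph V) (x : V) (S : Set V) {k : ℕ}
    (e : Fin k → V) : Prop :=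
  Function.Injective e ∧ (∀ i, e i ∈ S) ∧
  ∃ P : ∀ i : Fin k, G.Walk x (e i),
    (∀ i, (P i).IsPath) ∧
    (∀ i, ∀ y ∈ (P i).support, y ∈ S → y = e i) ∧
    (∀ i j, i ≠ j → ∀ y, y ∈ (P i).support → y ∈ (P j).support → y = x)

/-- `G` has a `k`-fan between `x` and `S`. -/
def HasFan {V : Type*} (G : SimpleGraph V) (x : V) (S : Set V) (k : ℕ) : Prop :=
  ∃ e : Fin k → V, HasFanOn G x S e

namespace PerfectFanAux

variable {V : Type*} {G : SimpleGraph V} {x : V} {S : Set V}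

/-- A bundled fan. -/
structure Fan (G : SimpleGraph V) (x : V) (S : Set V) (k : ℕ) where
  f : Fin k → V
  inj : Function.Injective f
  memS : ∀ i, f i ∈ S
  Q : ∀ i, G.Walk x (f i)
  path : ∀ i, (Q i).IsPath
  sOnly : ∀ i, ∀ y ∈ (Q i).support, y ∈ S → y = f i
  disj : ∀ i j, i ≠ j → ∀ y, y ∈ (Q i).support → y ∈ (Q j).support → y = x

/-- The set of edges used by a fan. -/
def Fan.ES {k : ℕ} (F : Fan G x S k) : Set (Sym2 V) := {s | ∃ j, s ∈ (F.Q j).edges}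

open Classical in
/-- Number of ends of `F0` missed by `F`. -/
noncomputable def aM {m k : ℕ} (F0 : Fan G x S m) (F : Fan G x S k) : ℕ :=
  (Finset.univ.filter (fun j : Fin m => F0.f j ∉ Set.range F.f)).card

open Classical in
/-- Number of edges of `F` (with multiplicity) outside the edges of `F0`. -/
noncomputable def bM {m k : ℕ} (F0 : Fan G x S m) (F : Fan G x S k) : ℕ :=
  ∑ i, (F.Q i).edges.countP (fun s => decide (s ∉ F0.ES))

/-- Terminal suffix of a walk from the last vertex belonging to `T`. -/
lemma exists_suffix (T : Set V) {u v : V} (W : G.Walk u v)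
    (h : ∃ z ∈ W.support, z ∈ T) :
    ∃ (y : V), y ∈ T ∧ ∃ R : G.Walk y v,
      (W.IsPath → R.IsPath) ∧ (∀ z ∈ R.support, z ∈ W.support) ∧
      (∀ s ∈ R.edges, s ∈ W.edges) ∧ (∀ z ∈ R.support, z ∈ T → z = y) := by
  induction W with
  | nil =>
    obtain ⟨z, hz, hzT⟩ := h
    simp only [SimpleGraph.Walk.support_nil, List.mem_singleton] at hz
    subst hz
    exact ⟨z, hzT, SimpleGraph.Walk.nil, fun h => h, by simp, by simp, by simp⟩
  | @cons a b c hadj W ih =>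
    by_cases hc : ∃ z ∈ W.support, z ∈ T
    · obtain ⟨y, hyT, R, hp, hsup, hedge, honly⟩ := ih hc
      refine ⟨y, hyT, R, fun hP => hp hP.of_cons, ?_, ?_, honly⟩
      · intro z hz; simp [hsup z hz]
      · intro s hs; simp [hedge s hs]
    · have haT : a ∈ T := by
        obtain ⟨z, hz, hzT⟩ := h
        simp only [SimpleGraph.Walk.support_cons, List.mem_cons] at hz
        rcases hz with rfl | hz
        · exact hzT
        · exact absurd ⟨z, hz, hzT⟩ hc
      refine ⟨a, haT, SimpleGraph.Walk.cons hadj W, fun h => h, fun z hz => hz,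
        fun s hs => hs, ?_⟩
      intro z hz hzT
      simp only [SimpleGraph.Walk.support_cons, List.mem_cons] at hz
      rcases hz with rfl | hz
      · rfl
      · exact absurd ⟨z, hz, hzT⟩ hc

/-- A walk avoiding `x` whose edges all lie in the fan `F0` stays within the single
path of `F0` containing its start. -/
lemma walk_in_path {m : ℕ} (F0 : Fan G x S m) (j0 : Fin m) {u v : V} (R : G.Walk u v)
    (hx : ∀ z ∈ R.support, z ≠ x) (hE : ∀ s ∈ R.edges, s ∈ F0.ES)
    (hu : u ∈ (F0.Q j0).support) : v ∈ (F0.Q j0).support := by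
  induction R with
  | nil => exact hu
  | @cons a b c hadj R ih =>
    obtain ⟨j, hj⟩ : s(a, b) ∈ F0.ES := hE _ (by simp)
    have haj : a ∈ (F0.Q j).support := SimpleGraph.Walk.fst_mem_support_of_mem_edges _ hj
    have hjj0 : j = j0 := by
      by_contra hne
      exact hx a (by simp) (F0.disj j j0 hne a haj hu)
    rw [hjj0] at hj
    have hb : b ∈ (F0.Q j0).support := SimpleGraph.Walk.snd_mem_support_of_mem_edges _ hj
    exact ih (fun z hz => hx z (by simp [hz])) (fun s hs => hE s (by simp [hs])) hb

lemma endpoint_notMem_takeUntil [DecidableEq V] {u v w : V} {p : G.Walk v w} (hp : p.IsPath)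
    (h : u ∈ p.support) (hne : u ≠ w) : w ∉ (p.takeUntil u h).support := by
  intro hw
  have hnd : ((p.takeUntil u h).append (p.dropUntil u h)).support.Nodup := by
    rw [SimpleGraph.Walk.take_spec]; exact hp.support_nodup
  rw [SimpleGraph.Walk.support_append, List.nodup_append] at hnd
  have hw2 : w ∈ (p.dropUntil u h).support.tail := by
    have hend : w ∈ (p.dropUntil u h).support := SimpleGraph.Walk.end_mem_support _
    rw [SimpleGraph.Walk.support_eq_cons] at hend
    rcases List.mem_cons.mp hend with rfl | hmem
    · exact absurd rfl hne
    · exact hmem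
  exact hnd.2.2 w hw w hw2 rfl

lemma start_notMem_dropUntil [DecidableEq V] {u v w : V} {p : G.Walk v w} (hp : p.IsPath)
    (h : u ∈ p.support) (hne : u ≠ v) : v ∉ (p.dropUntil u h).support := by
  intro hv
  have hnd : ((p.takeUntil u h).append (p.dropUntil u h)).support.Nodup := by
    rw [SimpleGraph.Walk.take_spec]; exact hp.support_nodup
  rw [SimpleGraph.Walk.support_append, List.nodup_append] at hnd
  have hv2 : v ∈ (p.dropUntil u h).support.tail := by
    rw [SimpleGraph.Walk.support_eq_cons] at hv
    rcases List.mem_cons.mp hv with rfl | hmem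
    · exact absurd rfl hne.symm
    · exact hmem
  exact hnd.2.2 v (SimpleGraph.Walk.start_mem_support _) v hv2 rfl

open Classical in
/-- Comparison of the `a`-measure after replacing the `i`-th path. -/
lemma aM_comp {m k : ℕ} (F0 : Fan G x S m) (F F1 : Fan G x S k) (i : Fin k) (j0 : Fin m)
    (hj0 : F0.f j0 ∉ Set.range F.f)
    (h0 : F1.f i = F0.f j0) (hoth : ∀ i', i' ≠ i → F1.f i' = F.f i') :
    aM F0 F1 ≤ aM F0 F ∧ (F.f i ∉ Set.range F0.f → aM F0 F1 < aM F0 F) := by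
  classical
  have hj0A : j0 ∈ Finset.univ.filter (fun j : Fin m => F0.f j ∉ Set.range F.f) :=
    Finset.mem_filter.mpr ⟨Finset.mem_univ _, hj0⟩
  have hmem : ∀ j, F0.f j ∉ Set.range F1.f →
      j ≠ j0 ∧ (F0.f j = F.f i ∨ F0.f j ∉ Set.range F.f) := by
    intro j hjA
    constructor
    · rintro rfl; exact hjA ⟨i, h0⟩
    · by_cases hfi : F0.f j = F.f i
      · exact Or.inl hfi
      · refine Or.inr ?_
        rintro ⟨i', hi'⟩
        by_cases hii : i' = i
        · exact hfi (hii ▸ hi').symm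
        · exact hjA ⟨i', (hoth i' hii).trans hi'⟩
  simp only [aM]
  by_cases hfi : ∃ j1, F0.f j1 = F.f i
  · obtain ⟨j1, hj1⟩ := hfi
    have hsub : (Finset.univ.filter (fun j : Fin m => F0.f j ∉ Set.range F1.f)) ⊆
        insert j1 ((Finset.univ.filter (fun j : Fin m => F0.f j ∉ Set.range F.f)).erase j0) := by
      intro j hj
      simp only [Finset.mem_filter, Finset.mem_univ, true_and] at hj
      obtain ⟨hne, hc⟩ := hmem j hj
      rcases hc with hc | hc
      · have : j = j1 := F0.inj (by rw [hj1, hc])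
        simp [this]
      · exact Finset.mem_insert.mpr (Or.inr (Finset.mem_erase.mpr
          ⟨hne, Finset.mem_filter.mpr ⟨Finset.mem_univ _, hc⟩⟩))
    have hcard1 : 1 ≤ (Finset.univ.filter (fun j : Fin m => F0.f j ∉ Set.range F.f)).card :=
      Finset.card_pos.mpr ⟨j0, hj0A⟩
    have hle : (Finset.univ.filter (fun j : Fin m => F0.f j ∉ Set.range F1.f)).card ≤
        (Finset.univ.filter (fun j : Fin m => F0.f j ∉ Set.range F.f)).card := by
      calc (Finset.univ.filter (fun j : Fin m => F0.f j ∉ Set.range F1.f)).card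
          ≤ (insert j1 ((Finset.univ.filter
              (fun j : Fin m => F0.f j ∉ Set.range F.f)).erase j0)).card :=
            Finset.card_le_card hsub
        _ ≤ ((Finset.univ.filter (fun j : Fin m => F0.f j ∉ Set.range F.f)).erase j0).card + 1 :=
            Finset.card_insert_le _ _
        _ ≤ _ := by rw [Finset.card_erase_of_mem hj0A]; omega
    exact ⟨hle, fun hstr => absurd ⟨j1, hj1⟩ hstr⟩
  · have hsub : (Finset.univ.filter (fun j : Fin m => F0.f j ∉ Set.range F1.f)) ⊆
        (Finset.univ.filter (fun j : Fin m => F0.f j ∉ Set.range F.f)).erase j0 := by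
      intro j hj
      simp only [Finset.mem_filter, Finset.mem_univ, true_and] at hj
      obtain ⟨hne, hc⟩ := hmem j hj
      rcases hc with hc | hc
      · exact absurd ⟨j, hc⟩ hfi
      · exact Finset.mem_erase.mpr ⟨hne, Finset.mem_filter.mpr ⟨Finset.mem_univ _, hc⟩⟩
    have hlt := lt_of_le_of_lt (Finset.card_le_card hsub)
      (Finset.card_erase_lt_of_mem hj0A)
    exact ⟨hlt.le, fun _ => hlt⟩

open Classical in
/-- Comparison of the `b`-measure after replacing the `i`-th path. -/
lemma bM_comp {m k : ℕ} (F0 : Fan G x S m) (F F1 : Fan G x S k) (i : Fin k)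
    (hoth : ∀ i', i' ≠ i → (F1.Q i').edges = (F.Q i').edges)
    (hle : (F1.Q i).edges.countP (fun s => decide (s ∉ F0.ES)) ≤
      (F.Q i).edges.countP (fun s => decide (s ∉ F0.ES))) :
    bM F0 F1 ≤ bM F0 F ∧
      ((F1.Q i).edges.countP (fun s => decide (s ∉ F0.ES)) <
        (F.Q i).edges.countP (fun s => decide (s ∉ F0.ES)) → bM F0 F1 < bM F0 F) := by
  classical
  constructor
  · apply Finset.sum_le_sum
    intro i' _
    by_cases h : i' = i
    · subst h; exact hle
    · rw [hoth i' h]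
  · intro hlt
    apply Finset.sum_lt_sum
    · intro i' _
      by_cases h : i' = i
      · subst h; exact hle
      · rw [hoth i' h]
    · exact ⟨i, Finset.mem_univ i, hlt⟩

open Classical in
/-- The augmenting step. -/
lemma step [DecidableEq V] {m k : ℕ} (F0 : Fan G x S m) (F : Fan G x S k) (hmk : m < k)
    (ha : aM F0 F ≠ 0) :
    ∃ F1 : Fan G x S k,
      (aM F0 F1 < aM F0 F ∧ bM F0 F1 ≤ bM F0 F) ∨
      (aM F0 F1 ≤ aM F0 F ∧ bM F0 F1 < bM F0 F) := by
  -- pick a missed end of `F0`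
  obtain ⟨j0, hj0⟩ : ∃ j0, F0.f j0 ∉ Set.range F.f := by
    by_contra h
    push_neg at h
    apply ha
    simp only [aM, Finset.card_eq_zero, Finset.filter_eq_empty_iff]
    intro j _
    simp only [Set.not_notMem]
    exact h j
  set T : Set V := {z | ∃ i, z ∈ (F.Q i).support} with hT
  have hi0 : (0 : ℕ) < k := lt_of_le_of_lt (Nat.zero_le m) hmk
  -- last vertex `y` of `P j0` lying on the fan `F`, with the terminal segment `R`
  obtain ⟨y, hyT, R, hRp, hRsup, hRedge, hRonly⟩ :=
    exists_suffix T (F0.Q j0) ⟨x, SimpleGraph.Walk.start_mem_support _,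
      ⟨⟨0, hi0⟩, SimpleGraph.Walk.start_mem_support _⟩⟩
  have hRpath : R.IsPath := hRp (F0.path j0)
  have hyS : y ∉ S := by
    intro hyS
    obtain ⟨i, hyQi⟩ := hyT
    have h1 : y = F.f i := F.sOnly i y hyQi hyS
    have h2 : y = F0.f j0 :=
      F0.sOnly j0 y (hRsup y (SimpleGraph.Walk.start_mem_support _)) hyS
    exact hj0 ⟨i, h1.symm.trans h2⟩
  -- choose the path of `F` through `y`
  obtain ⟨i, hyQi, hspec⟩ :
      ∃ i, y ∈ (F.Q i).support ∧ (y = x → F.f i ∉ Set.range F0.f) := by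
    by_cases hyx : y = x
    · subst hyx
      have hex : ∃ i, F.f i ∉ Set.range F0.f := by
        by_contra h
        push_neg at h
        have h' : ∀ i, ∃ j, F0.f j = F.f i := fun i => h i
        choose g hg using h'
        have hginj : Function.Injective g := by
          intro i1 i2 h12
          apply F.inj
          rw [← hg i1, ← hg i2, h12]
        have hcard := Fintype.card_le_of_injective g hginj
        simp only [Fintype.card_fin] at hcard
        omega
      obtain ⟨i, hi⟩ := hex
      exact ⟨i, SimpleGraph.Walk.start_mem_support _, fun _ => hi⟩
    · obtain ⟨i, hyQi⟩ := hyT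
      exact ⟨i, hyQi, fun h => absurd h hyx⟩
  have hyfi : y ≠ F.f i := fun h => hyS (h ▸ F.memS i)
  set tk := (F.Q i).takeUntil y hyQi with htk
  set dr := (F.Q i).dropUntil y hyQi with hdr
  have htkp : tk.IsPath := (F.path i).takeUntil hyQi
  have htksup : ∀ z ∈ tk.support, z ∈ (F.Q i).support :=
    fun z hz => SimpleGraph.Walk.support_takeUntil_subset _ hyQi hz
  have hfitk : F.f i ∉ tk.support := endpoint_notMem_takeUntil (F.path i) hyQi hyfi
  set W0 : G.Walk x (F0.f j0) := tk.append R with hW0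
  have hW0sup : ∀ z, z ∈ W0.support ↔ z ∈ tk.support ∨ z ∈ R.support :=
    fun z => SimpleGraph.Walk.mem_support_append_iff _ _
  have hynotail : y ∉ R.support.tail := by
    have := hRpath.support_nodup
    rw [SimpleGraph.Walk.support_eq_cons] at this
    exact (List.nodup_cons.mp this).1
  have hW0path : W0.IsPath := by
    rw [SimpleGraph.Walk.isPath_def, hW0, SimpleGraph.Walk.support_append, List.nodup_append]
    refine ⟨htkp.support_nodup, hRpath.support_nodup.tail, ?_⟩
    intro z hz1 b hz2 hzb; subst hzb
    have hzT : z ∈ T := ⟨i, htksup z hz1⟩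
    have hzy : z = y := hRonly z (List.mem_of_mem_tail hz2) hzT
    exact hynotail (hzy ▸ hz2)
  have hsOnlyW0 : ∀ z ∈ W0.support, z ∈ S → z = F0.f j0 := by
    intro z hz hzS
    rcases (hW0sup z).mp hz with h | h
    · have h2 : z = F.f i := F.sOnly i z (htksup z h) hzS
      exact absurd (h2 ▸ h) hfitk
    · exact F0.sOnly j0 z (hRsup z h) hzS
  have hdisjW0 : ∀ i', i' ≠ i → ∀ z, z ∈ W0.support → z ∈ (F.Q i').support → z = x := by
    intro i' hne z hz hz'
    rcases (hW0sup z).mp hz with h | h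
    · exact F.disj i i' (fun hh => hne hh.symm) z (htksup z h) hz'
    · have hzy : z = y := hRonly z h ⟨i', hz'⟩
      subst hzy
      exact F.disj i' i hne z hz' hyQi
  -- the new ends and new paths
  set f1 : Fin k → V := fun i' => if i' = i then F0.f j0 else F.f i' with hf1
  have hf1i : f1 i = F0.f j0 := by simp [hf1]
  have hf1ne : ∀ i', i' ≠ i → f1 i' = F.f i' := fun i' h => by simp [hf1, h]
  have hf1inj : Function.Injective f1 := by
    intro a b hab
    by_cases haa : a = i <;> by_cases hbb : b = i
    · rw [haa, hbb]
    · rw [haa, hf1i, hf1ne b hbb] at hab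
      exact absurd ⟨b, hab.symm⟩ hj0
    · rw [hbb, hf1i, hf1ne a haa] at hab
      exact absurd ⟨a, hab⟩ hj0
    · rw [hf1ne a haa, hf1ne b hbb] at hab
      exact F.inj hab
  have hmemS1 : ∀ i', f1 i' ∈ S := by
    intro i'
    by_cases h : i' = i
    · rw [h, hf1i]; exact F0.memS j0
    · rw [hf1ne i' h]; exact F.memS i'
  let Q1 : ∀ i', G.Walk x (f1 i') := fun i' =>
    if h : i' = i then W0.copy rfl (by rw [h, hf1i]) else (F.Q i').copy rfl (hf1ne i' h).symm
  have hQ1sup : ∀ i', (Q1 i').support = if i' = i then W0.support else (F.Q i').support := by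
    intro i'
    by_cases h : i' = i
    · simp only [Q1, dif_pos h, if_pos h, SimpleGraph.Walk.support_copy]
    · simp only [Q1, dif_neg h, if_neg h, SimpleGraph.Walk.support_copy]
  have hQ1edges : ∀ i', (Q1 i').edges = if i' = i then W0.edges else (F.Q i').edges := by
    intro i'
    by_cases h : i' = i
    · simp only [Q1, dif_pos h, if_pos h, SimpleGraph.Walk.edges_copy]
    · simp only [Q1, dif_neg h, if_neg h, SimpleGraph.Walk.edges_copy]
  have hpath1 : ∀ i', (Q1 i').IsPath := by
    intro i'
    rw [SimpleGraph.Walk.isPath_def]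
    rw [hQ1sup i']
    by_cases h : i' = i
    · rw [if_pos h]; exact hW0path.support_nodup
    · rw [if_neg h]; exact (F.path i').support_nodup
  have hsOnly1 : ∀ i', ∀ z ∈ (Q1 i').support, z ∈ S → z = f1 i' := by
    intro i' z hz hzS
    rw [hQ1sup i'] at hz
    by_cases h : i' = i
    · rw [if_pos h] at hz
      rw [h, hf1i]
      exact hsOnlyW0 z hz hzS
    · rw [if_neg h] at hz
      rw [hf1ne i' h]
      exact F.sOnly i' z hz hzS
  have hdisj1 : ∀ i' i'', i' ≠ i'' → ∀ z, z ∈ (Q1 i').support → z ∈ (Q1 i'').support → z = x := by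
    intro i' i'' hne z hz hz'
    rw [hQ1sup i'] at hz
    rw [hQ1sup i''] at hz'
    by_cases h' : i' = i <;> by_cases h'' : i'' = i
    · exact absurd (h'.trans h''.symm) hne
    · rw [if_pos h'] at hz
      rw [if_neg h''] at hz'
      exact hdisjW0 i'' h'' z hz hz'
    · rw [if_neg h'] at hz
      rw [if_pos h''] at hz'
      exact hdisjW0 i' h' z hz' hz
    · rw [if_neg h'] at hz
      rw [if_neg h''] at hz'
      exact F.disj i' i'' hne z hz hz'
  refine ⟨⟨f1, hf1inj, hmemS1, Q1, hpath1, hsOnly1, hdisj1⟩, ?_⟩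
  -- measure comparisons
  set F1 : Fan G x S k := ⟨f1, hf1inj, hmemS1, Q1, hpath1, hsOnly1, hdisj1⟩ with hF1
  have haM := aM_comp F0 F F1 i j0 hj0 hf1i hf1ne
  -- edge counts
  have hcntR : R.edges.countP (fun s => decide (s ∉ F0.ES)) = 0 := by
    rw [List.countP_eq_zero]
    intro s hs
    simp only [decide_eq_true_eq, Set.not_notMem]
    exact ⟨j0, hRedge s hs⟩
  have hedgesQi : (F.Q i).edges = tk.edges ++ dr.edges := by
    conv_lhs => rw [← SimpleGraph.Walk.take_spec (F.Q i) hyQi]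
    rw [SimpleGraph.Walk.edges_append]
  have hcnt1 : (F1.Q i).edges.countP (fun s => decide (s ∉ F0.ES)) =
      tk.edges.countP (fun s => decide (s ∉ F0.ES)) := by
    have : (F1.Q i).edges = W0.edges := by rw [hF1]; rw [hQ1edges i, if_pos rfl]
    rw [this, hW0, SimpleGraph.Walk.edges_append, List.countP_append, hcntR, Nat.add_zero]
  have hcnt0 : (F.Q i).edges.countP (fun s => decide (s ∉ F0.ES)) =
      tk.edges.countP (fun s => decide (s ∉ F0.ES)) +
      dr.edges.countP (fun s => decide (s ∉ F0.ES)) := by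
    rw [hedgesQi, List.countP_append]
  have hcntle : (F1.Q i).edges.countP (fun s => decide (s ∉ F0.ES)) ≤
      (F.Q i).edges.countP (fun s => decide (s ∉ F0.ES)) := by
    rw [hcnt1, hcnt0]; omega
  have hbM := bM_comp F0 F F1 i (by
    intro i' h
    rw [hF1]
    rw [hQ1edges i', if_neg h]) hcntle
  by_cases hyx : y = x
  · exact Or.inl ⟨haM.2 (hspec hyx), hbM.1⟩
  · -- the dropped segment has an edge outside `F0`
    have hdrpos : 0 < dr.edges.countP (fun s => decide (s ∉ F0.ES)) := by
      rw [List.countP_pos_iff]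
      by_contra hcon
      push_neg at hcon
      have hallE : ∀ s ∈ dr.edges, s ∈ F0.ES := by
        intro s hs
        have := hcon s hs
        simpa using this
      have hxdr : x ∉ dr.support := start_notMem_dropUntil (F.path i) hyQi hyx
      have hfiP : F.f i ∈ (F0.Q j0).support := by
        refine walk_in_path F0 j0 dr ?_ hallE
          (hRsup y (SimpleGraph.Walk.start_mem_support _))
        intro z hz hzx
        exact hxdr (hzx ▸ hz)
      have : F.f i = F0.f j0 := F0.sOnly j0 (F.f i) hfiP (F.memS i)
      exact hj0 ⟨i, this⟩
    refine Or.inr ⟨haM.1, hbM.2 ?_⟩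
    rw [hcnt1, hcnt0]
    omega

open Classical in
/-- Iterating the augmenting step until all ends of `F0` are ends of the big fan. -/
lemma reach [DecidableEq V] {m k : ℕ} (F0 : Fan G x S m) (hmk : m < k) :
    ∀ n b0 (F : Fan G x S k), bM F0 F ≤ b0 → aM F0 F * (b0 + 1) + bM F0 F ≤ n →
      ∃ F1 : Fan G x S k, aM F0 F1 = 0 := by
  intro n
  induction n with
  | zero =>
    intro b0 F hb hμ
    refine ⟨F, ?_⟩
    have h1 : aM F0 F * (b0 + 1) = 0 :=
      Nat.eq_zero_of_le_zero (le_trans (Nat.le_add_right _ _) hμ)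
    rcases Nat.mul_eq_zero.mp h1 with h | h
    · exact h
    · omega
  | succ n ih =>
    intro b0 F hb hμ
    by_cases ha : aM F0 F = 0
    · exact ⟨F, ha⟩
    · obtain ⟨F1, hcase⟩ := step F0 F hmk ha
      rcases hcase with ⟨ha1, hb1⟩ | ⟨ha1, hb1⟩
      · refine ih b0 F1 (hb1.trans hb) ?_
        have h2 : aM F0 F1 + 1 ≤ aM F0 F := ha1
        have h3 : (aM F0 F1 + 1) * (b0 + 1) ≤ aM F0 F * (b0 + 1) :=
          Nat.mul_le_mul_right _ h2
        have h3' : aM F0 F1 * (b0 + 1) + (b0 + 1) ≤ aM F0 F * (b0 + 1) := by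
          calc aM F0 F1 * (b0 + 1) + (b0 + 1) = (aM F0 F1 + 1) * (b0 + 1) := by ring
            _ ≤ _ := h3
        have h4 : bM F0 F1 ≤ b0 := hb1.trans hb
        linarith [hμ]
      · refine ih b0 F1 ((le_of_lt hb1).trans hb) ?_
        have h3 : aM F0 F1 * (b0 + 1) ≤ aM F0 F * (b0 + 1) :=
          Nat.mul_le_mul_right _ ha1
        linarith [hμ]

end PerfectFanAux

/-- Perfect's theorem: if `G` has a `k`-fan between `x` and `S ⊆ V(G) \ {x}`, then any
`(k-1)`-fan between `x` and `S` extends to a `k`-fan between `x` and `S` whose set of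
end vertices contains the end vertices of the `(k-1)`-fan. -/
theorem perfect_fan_extension {V : Type*} (G : SimpleGraph V) (x : V) (S : Set V)
    (hxS : x ∉ S) (k : ℕ) (hk : 1 ≤ k) (hfan : HasFan G x S k)
    (e : Fin (k - 1) → V) (he : HasFanOn G x S e) :
    ∃ e' : Fin k → V, HasFanOn G x S e' ∧ Set.range e ⊆ Set.range e' := by
  classical
  obtain ⟨f, finj, fmem, Q, Qpath, QS, Qdisj⟩ := hfan
  obtain ⟨einj, emem, P, Ppath, PS, Pdisj⟩ := he
  set F0 : PerfectFanAux.Fan G x S (k - 1) := ⟨e, einj, emem, P, Ppath, PS, Pdisj⟩ with hF0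
  set F : PerfectFanAux.Fan G x S k := ⟨f, finj, fmem, Q, Qpath, QS, Qdisj⟩ with hF
  have hmk : k - 1 < k := by omega
  obtain ⟨F1, hF1⟩ := PerfectFanAux.reach F0 hmk
    (PerfectFanAux.aM F0 F * (PerfectFanAux.bM F0 F + 1) + PerfectFanAux.bM F0 F)
    (PerfectFanAux.bM F0 F) F le_rfl le_rfl
  refine ⟨F1.f, ⟨F1.inj, F1.memS, F1.Q, F1.path, F1.sOnly, F1.disj⟩, ?_⟩
  rintro w ⟨j, rfl⟩
  by_contra hc
  have hmem : j ∈ Finset.univ.filter (fun j : Fin (k - 1) => F0.f j ∉ Set.range F1.f) :=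
    Finset.mem_filter.mpr ⟨Finset.mem_univ _, hc⟩
  have h0 : (Finset.univ.filter (fun j : Fin (k - 1) => F0.f j ∉ Set.range F1.f)).card = 0 := hF1
  rw [Finset.card_eq_zero] at h0
  rw [h0] at hmem
  exact absurd hmem (Finset.notMem_empty _)
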